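/- If p ∈ ℝ² \ {(0,0)} is σ-irrational (i.e., p is not on any σ-rational line), then ‖U_σⁿ(p)‖ ≤ 2⁻ⁿ ‖p‖ for all n ≥ 0, where ‖(x,y)‖ = |x| + |y| and U_σ is the square of the accelerated Euclidean algorithm map F_σ. -/

import Mathlib

open Set

noncomputable section

def hmap (σ : ℝ ≃ ℝ) : (ℝ × ℝ) ≃ (ℝ × ℝ) where
  toFun p := (p.1 + σ.symm p.2, p.2)
  invFun p := (p.1 - σ.symm p.2, p.2)
  left_inv p := by simp
  right_inv p := by simp

def vmap (σ : ℝ ≃ ℝ) : (ℝ × ℝ) ≃ (ℝ × ℝ) where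
  toFun p := (p.1, p.2 + σ p.1)
  invFun p := (p.1, p.2 - σ p.1)
  left_inv p := by simp
  right_inv p := by simp

def Xset : Set (ℝ × ℝ) := {p | p ≠ 0 ∧ 0 ≤ p.1 * p.2 ∧ p.1 ≠ 0}
def Yset : Set (ℝ × ℝ) := {p | p ≠ 0 ∧ p.1 * p.2 ≤ 0 ∧ p.2 ≠ 0}
def Omeg : Set (ℝ × ℝ) := {p | p ≠ 0}

def ratLines (σ : ℝ ≃ ℝ) : Set (Set (ℝ × ℝ)) :=
  {{p : ℝ × ℝ | p.2 = 0}, {p : ℝ × ℝ | p.1 = 0}} ∪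
  ((fun w : Function.End (ℝ × ℝ) => w '' {p : ℝ × ℝ | p.2 = 0}) ''
    ↑(Submonoid.closure {(⇑(hmap σ) : Function.End (ℝ × ℝ)), ⇑(vmap σ)} : Submonoid (Function.End (ℝ × ℝ)))) ∪
  ((fun w : Function.End (ℝ × ℝ) => w '' {p : ℝ × ℝ | p.1 = 0}) ''
    ↑(Submonoid.closure {(⇑(hmap σ).symm : Function.End (ℝ × ℝ)), ⇑(vmap σ).symm} : Submonoid (Function.End (ℝ × ℝ))))

def Aset (σ : ℝ ≃ ℝ) : Set (ℝ × ℝ) := ⇑(hmap σ) '' Xset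
def Bset (σ : ℝ ≃ ℝ) : Set (ℝ × ℝ) := ⇑(vmap σ) '' Xset
def Cset (σ : ℝ ≃ ℝ) : Set (ℝ × ℝ) := ⇑(hmap σ).symm '' Yset
def Dset (σ : ℝ ≃ ℝ) : Set (ℝ × ℝ) := ⇑(vmap σ).symm '' Yset

open scoped Classical in
/-- The accelerated Euclidean algorithm F_σ. -/
noncomputable def Facc (σ : ℝ ≃ ℝ) : ℝ × ℝ → ℝ × ℝ := fun p =>
  if p ∈ Aset σ then
    (if hn : ∃ n : ℕ, (⇑(hmap σ).symm)^[n] p ∈ Bset σ then (⇑(hmap σ).symm)^[Nat.find hn] p else p)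
  else if p ∈ Bset σ then
    (if hn : ∃ n : ℕ, (⇑(vmap σ).symm)^[n] p ∈ Aset σ then (⇑(vmap σ).symm)^[Nat.find hn] p else p)
  else if p ∈ Cset σ then
    (if hn : ∃ n : ℕ, (⇑(hmap σ))^[n] p ∈ Dset σ then (⇑(hmap σ))^[Nat.find hn] p else p)
  else
    (if hn : ∃ n : ℕ, (⇑(vmap σ))^[n] p ∈ Cset σ then (⇑(vmap σ))^[Nat.find hn] p else p)

section Basic

variable {σ : ℝ ≃ ℝ} (hmono : StrictMono σ) (hodd : ∀ x : ℝ, σ (-x) = -σ x)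

def Irr (σ : ℝ ≃ ℝ) (p : ℝ × ℝ) : Prop := ∀ L ∈ ratLines σ, p ∉ L

include hodd in
lemma sig_zero : σ 0 = 0 := by have := hodd 0; simp at this; linarith

include hodd in
lemma symm_odd (y : ℝ) : σ.symm (-y) = -σ.symm y := by
  apply σ.injective; rw [σ.apply_symm_apply, hodd, σ.apply_symm_apply]

include hmono in
lemma symm_mono : StrictMono σ.symm := fun a b h => by
  rw [← hmono.lt_iff_lt, σ.apply_symm_apply, σ.apply_symm_apply]; exact h

include hmono hodd in
omit hmono in
lemma symm_zero : σ.symm 0 = 0 := by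
  conv_lhs => rw [← sig_zero hodd]
  exact σ.symm_apply_apply 0

include hmono hodd in
lemma sig_pos {x : ℝ} : 0 < σ x ↔ 0 < x := by
  constructor
  · intro h; by_contra hc; push_neg at hc
    have := hmono.monotone hc
    rw [sig_zero hodd] at this; linarith
  · intro h; have := hmono h; rwa [sig_zero hodd] at this

include hmono hodd in
lemma symm_pos {y : ℝ} : 0 < σ.symm y ↔ 0 < y := by
  constructor
  · intro h; by_contra hc; push_neg at hc
    have := (symm_mono hmono).monotone hc
    rw [symm_zero hodd] at this; linarith
  · intro h; have := symm_mono hmono h; rwa [symm_zero hodd] at this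

lemma memA {p : ℝ × ℝ} : p ∈ Aset σ ↔
    0 ≤ (p.1 - σ.symm p.2) * p.2 ∧ p.1 - σ.symm p.2 ≠ 0 := by
  rw [Aset, Set.mem_image_equiv]
  show ((hmap σ).symm p ∈ Xset) ↔ _
  have : (hmap σ).symm p = (p.1 - σ.symm p.2, p.2) := rfl
  rw [this, Xset]
  constructor
  · rintro ⟨-, h2, h3⟩; exact ⟨h2, h3⟩
  · rintro ⟨h2, h3⟩
    exact ⟨fun h => h3 (by simpa using congrArg Prod.fst h), h2, h3⟩

lemma memB {p : ℝ × ℝ} : p ∈ Bset σ ↔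
    0 ≤ p.1 * (p.2 - σ p.1) ∧ p.1 ≠ 0 := by
  rw [Bset, Set.mem_image_equiv]
  show ((vmap σ).symm p ∈ Xset) ↔ _
  have : (vmap σ).symm p = (p.1, p.2 - σ p.1) := rfl
  rw [this, Xset]
  constructor
  · rintro ⟨-, h2, h3⟩; exact ⟨h2, h3⟩
  · rintro ⟨h2, h3⟩
    exact ⟨fun h => h3 (by simpa using congrArg Prod.fst h), h2, h3⟩

lemma memC {p : ℝ × ℝ} : p ∈ Cset σ ↔
    (p.1 + σ.symm p.2) * p.2 ≤ 0 ∧ p.2 ≠ 0 := by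
  rw [Cset]
  have : ⇑(hmap σ).symm = ⇑(hmap σ).symm := rfl
  rw [show (⇑(hmap σ).symm '' Yset : Set (ℝ×ℝ)) = ⇑((hmap σ).symm) '' Yset from rfl,
    Set.mem_image_equiv]
  show ((hmap σ).symm.symm p ∈ Yset) ↔ _
  have : (hmap σ).symm.symm p = (p.1 + σ.symm p.2, p.2) := rfl
  rw [this, Yset]
  constructor
  · rintro ⟨-, h2, h3⟩; exact ⟨h2, h3⟩
  · rintro ⟨h2, h3⟩
    exact ⟨fun h => h3 (by simpa using congrArg Prod.snd h), h2, h3⟩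

lemma memD {p : ℝ × ℝ} : p ∈ Dset σ ↔
    p.1 * (p.2 + σ p.1) ≤ 0 ∧ p.2 + σ p.1 ≠ 0 := by
  rw [Dset, show (⇑(vmap σ).symm '' Yset : Set (ℝ×ℝ)) = ⇑((vmap σ).symm) '' Yset from rfl,
    Set.mem_image_equiv]
  show ((vmap σ).symm.symm p ∈ Yset) ↔ _
  have : (vmap σ).symm.symm p = (p.1, p.2 + σ p.1) := rfl
  rw [this, Yset]
  constructor
  · rintro ⟨-, h2, h3⟩; exact ⟨h2, h3⟩
  · rintro ⟨h2, h3⟩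
    exact ⟨fun h => h3 (by simpa using congrArg Prod.snd h), h2, h3⟩

lemma hs_iter {p : ℝ × ℝ} (n : ℕ) :
    (⇑(hmap σ).symm)^[n] p = (p.1 - n * σ.symm p.2, p.2) := by
  induction n with
  | zero => simp
  | succ n ih =>
    rw [Function.iterate_succ_apply', ih]
    show (_ - _, _) = _
    push_cast; ring_nf

lemma h_iter {p : ℝ × ℝ} (n : ℕ) :
    (⇑(hmap σ))^[n] p = (p.1 + n * σ.symm p.2, p.2) := by
  induction n with
  | zero => simp
  | succ n ih =>
    rw [Function.iterate_succ_apply', ih]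
    show (_ + _, _) = _
    push_cast; ring_nf

lemma vs_iter {p : ℝ × ℝ} (n : ℕ) :
    (⇑(vmap σ).symm)^[n] p = (p.1, p.2 - n * σ p.1) := by
  induction n with
  | zero => simp
  | succ n ih =>
    rw [Function.iterate_succ_apply', ih]
    show (_, _ - _) = _
    push_cast; ring_nf

lemma v_iter {p : ℝ × ℝ} (n : ℕ) :
    (⇑(vmap σ))^[n] p = (p.1, p.2 + n * σ p.1) := by
  induction n with
  | zero => simp
  | succ n ih =>
    rw [Function.iterate_succ_apply', ih]
    show (_, _ + _) = _
    push_cast; ring_nf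

end Basic

abbrev posM (σ : ℝ ≃ ℝ) : Submonoid (Function.End (ℝ × ℝ)) :=
  Submonoid.closure {(⇑(hmap σ) : Function.End (ℝ × ℝ)), ⇑(vmap σ)}

abbrev negM (σ : ℝ ≃ ℝ) : Submonoid (Function.End (ℝ × ℝ)) :=
  Submonoid.closure {(⇑(hmap σ).symm : Function.End (ℝ × ℝ)), ⇑(vmap σ).symm}

section Lines

variable {σ : ℝ ≃ ℝ} (hmono : StrictMono σ) (hodd : ∀ x : ℝ, σ (-x) = -σ x)

lemma Ox_mem : {p : ℝ × ℝ | p.2 = 0} ∈ ratLines σ :=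
  Or.inl (Or.inl (Set.mem_insert _ _))

lemma Oy_mem : {p : ℝ × ℝ | p.1 = 0} ∈ ratLines σ :=
  Or.inl (Or.inl (Set.mem_insert_of_mem _ rfl))

lemma pos_line_mem (m : Function.End (ℝ × ℝ))
    (hm : m ∈ posM σ) :
    m '' {p : ℝ × ℝ | p.2 = 0} ∈ ratLines σ :=
  Or.inl (Or.inr ⟨m, SetLike.mem_coe.mpr hm, rfl⟩)

lemma neg_line_mem (m : Function.End (ℝ × ℝ))
    (hm : m ∈ negM σ) :
    m '' {p : ℝ × ℝ | p.1 = 0} ∈ ratLines σ :=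
  Or.inr ⟨m, SetLike.mem_coe.mpr hm, rfl⟩

lemma iter_mem_closure {α : Type*} (f : Function.End α) (s : Set (Function.End α))
    (hf : f ∈ s) (k : ℕ) :
    (f^[k] : Function.End α) ∈ (Submonoid.closure s : Submonoid (Function.End α)) := by
  induction k with
  | zero =>
    show (1 : Function.End α) ∈ _
    exact Submonoid.one_mem (Submonoid.closure s)
  | succ k ih =>
    show (@HMul.hMul (Function.End α) (Function.End α) (Function.End α) _ f^[k] f) ∈ _
    exact Submonoid.mul_mem (Submonoid.closure s) ih (Submonoid.subset_closure hf)

include hmono hodd in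
lemma symm_mul_nonneg (y : ℝ) : 0 ≤ σ.symm y * y := by
  rcases le_or_gt 0 y with h | h
  · rcases h.lt_or_eq with h | h
    · have := (symm_pos hmono hodd).2 h; nlinarith
    · rw [← h]; simp [symm_zero hodd]
  · have h2 : 0 < σ.symm (-y) := (symm_pos hmono hodd).2 (by linarith)
    rw [symm_odd hodd] at h2; nlinarith

include hmono hodd in
lemma sig_mul_nonneg (x : ℝ) : 0 ≤ x * σ x := by
  rcases le_or_gt 0 x with h | h
  · rcases h.lt_or_eq with h | h
    · have := (sig_pos hmono hodd).2 h; nlinarith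
    · rw [← h]; simp [sig_zero hodd]
  · have h2 : 0 < σ (-x) := (sig_pos hmono hodd).2 (by linarith)
    rw [hodd] at h2; nlinarith

include hmono hodd in
lemma pos_maps {m : Function.End (ℝ × ℝ)}
    (hm : m ∈ posM σ) :
    ∀ r : ℝ × ℝ, 0 ≤ r.1 * r.2 → 0 ≤ (m r).1 * (m r).2 := by
  induction hm using Submonoid.closure_induction with
  | mem x hx =>
    rcases hx with h | h <;> subst h <;> intro r hr
    · show 0 ≤ (r.1 + σ.symm r.2) * r.2
      nlinarith [symm_mul_nonneg hmono hodd r.2]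
    · show 0 ≤ r.1 * (r.2 + σ r.1)
      nlinarith [sig_mul_nonneg hmono hodd r.1]
  | one => exact fun r hr => hr
  | mul x y hx hy ihx ihy => exact fun r hr => ihx _ (ihy r hr)

include hmono hodd in
lemma neg_maps {m : Function.End (ℝ × ℝ)}
    (hm : m ∈ negM σ) :
    ∀ r : ℝ × ℝ, r.1 * r.2 ≤ 0 → (m r).1 * (m r).2 ≤ 0 := by
  induction hm using Submonoid.closure_induction with
  | mem x hx =>
    rcases hx with h | h <;> subst h <;> intro r hr
    · show (r.1 - σ.symm r.2) * r.2 ≤ 0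
      nlinarith [symm_mul_nonneg hmono hodd r.2]
    · show r.1 * (r.2 - σ r.1) ≤ 0
      nlinarith [sig_mul_nonneg hmono hodd r.1]
  | one => exact fun r hr => hr
  | mul x y hx hy ihx ihy => exact fun r hr => ihx _ (ihy r hr)

include hodd in
lemma maps_neg_pos {m : Function.End (ℝ × ℝ)}
    (hm : m ∈ posM σ) :
    ∀ r : ℝ × ℝ, m (-r) = -(m r) := by
  induction hm using Submonoid.closure_induction with
  | mem x hx =>
    rcases hx with h | h <;> subst h <;> intro r
    · show ((-r).1 + σ.symm (-r).2, (-r).2) = -((r.1 + σ.symm r.2, r.2) : ℝ × ℝ)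
      simp [symm_odd hodd, Prod.ext_iff]; ring
    · show ((-r).1, (-r).2 + σ (-r).1) = -((r.1, r.2 + σ r.1) : ℝ × ℝ)
      simp [hodd, Prod.ext_iff]; ring
  | one => exact fun r => rfl
  | mul x y hx hy ihx ihy => exact fun r => by show x (y (-r)) = _; rw [ihy, ihx]; rfl

include hodd in
lemma maps_neg_neg {m : Function.End (ℝ × ℝ)}
    (hm : m ∈ negM σ) :
    ∀ r : ℝ × ℝ, m (-r) = -(m r) := by
  induction hm using Submonoid.closure_induction with
  | mem x hx =>
    rcases hx with h | h <;> subst h <;> intro r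
    · show ((-r).1 - σ.symm (-r).2, (-r).2) = -((r.1 - σ.symm r.2, r.2) : ℝ × ℝ)
      simp [symm_odd hodd, Prod.ext_iff]; ring
    · show ((-r).1, (-r).2 - σ (-r).1) = -((r.1, r.2 - σ r.1) : ℝ × ℝ)
      simp [hodd, Prod.ext_iff]; ring
  | one => exact fun r => rfl
  | mul x y hx hy ihx ihy => exact fun r => by show x (y (-r)) = _; rw [ihy, ihx]; rfl

include hmono hodd in
lemma irr_of_pos {p q : ℝ × ℝ} (hp : Irr σ p) {m : Function.End (ℝ × ℝ)}
    (hm : m ∈ posM σ)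
    (hq : m q = p) (hpos : 0 < q.1 * q.2) : Irr σ q := by
  intro L hL hqL
  rcases hL with (hL | ⟨w, hw, rfl⟩) | ⟨w, hw, rfl⟩
  · rcases hL with h | h
    · subst h; rw [Set.mem_setOf_eq] at hqL; rw [hqL, mul_zero] at hpos; exact lt_irrefl _ hpos
    · rw [Set.mem_singleton_iff] at h; subst h
      rw [Set.mem_setOf_eq] at hqL; rw [hqL, zero_mul] at hpos; exact lt_irrefl _ hpos
  · obtain ⟨r, hr, hrq⟩ := hqL
    have hw' : w ∈ posM σ := SetLike.mem_coe.mp hw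
    have hmw : m * w ∈ posM σ := mul_mem hm hw'
    exact hp _ (pos_line_mem (m * w) hmw)
      ⟨r, hr, by show m (w r) = p; rw [hrq, hq]⟩
  · obtain ⟨r, hr, rfl⟩ := hqL
    have := neg_maps hmono hodd (SetLike.mem_coe.mp hw) r
      (by rw [Set.mem_setOf_eq] at hr; rw [hr]; simp)
    linarith

include hmono hodd in
lemma irr_of_neg {p q : ℝ × ℝ} (hp : Irr σ p) {m : Function.End (ℝ × ℝ)}
    (hm : m ∈ negM σ)
    (hq : m q = p) (hneg : q.1 * q.2 < 0) : Irr σ q := by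
  intro L hL hqL
  rcases hL with (hL | ⟨w, hw, rfl⟩) | ⟨w, hw, rfl⟩
  · rcases hL with h | h
    · subst h; rw [Set.mem_setOf_eq] at hqL; rw [hqL, mul_zero] at hneg; exact lt_irrefl _ hneg
    · rw [Set.mem_singleton_iff] at h; subst h
      rw [Set.mem_setOf_eq] at hqL; rw [hqL, zero_mul] at hneg; exact lt_irrefl _ hneg
  · obtain ⟨r, hr, rfl⟩ := hqL
    have := pos_maps hmono hodd (SetLike.mem_coe.mp hw) r
      (by rw [Set.mem_setOf_eq] at hr; rw [hr]; simp)
    linarith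
  · obtain ⟨r, hr, hrq⟩ := hqL
    have hw' : w ∈ negM σ := SetLike.mem_coe.mp hw
    have hmw : m * w ∈ negM σ := mul_mem hm hw'
    exact hp _ (neg_line_mem (m * w) hmw)
      ⟨r, hr, by show m (w r) = p; rw [hrq, hq]⟩

include hodd in
lemma irr_neg {p : ℝ × ℝ} (hp : Irr σ p) : Irr σ (-p) := by
  intro L hL hmem
  apply hp L hL
  rcases hL with (hL | ⟨w, hw, rfl⟩) | ⟨w, hw, rfl⟩
  · rcases hL with h | h
    · subst h; rw [Set.mem_setOf_eq] at hmem ⊢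
      have : (-p).2 = -p.2 := rfl
      rw [this] at hmem; linarith
    · rw [Set.mem_singleton_iff] at h; subst h
      rw [Set.mem_setOf_eq] at hmem ⊢
      have : (-p).1 = -p.1 := rfl
      rw [this] at hmem; linarith
  · obtain ⟨r, hr, hrq⟩ := hmem
    refine ⟨-r, ?_, ?_⟩
    · rw [Set.mem_setOf_eq] at hr ⊢; simp [hr]
    · rw [maps_neg_pos hodd (SetLike.mem_coe.mp hw), hrq, neg_neg]
  · obtain ⟨r, hr, hrq⟩ := hmem
    refine ⟨-r, ?_, ?_⟩
    · rw [Set.mem_setOf_eq] at hr ⊢; simp [hr]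
    · rw [maps_neg_neg hodd (SetLike.mem_coe.mp hw), hrq, neg_neg]

include hmono hodd in
lemma diag_mem : {r : ℝ × ℝ | r.2 = σ r.1} ∈ ratLines σ := by
  have : {r : ℝ × ℝ | r.2 = σ r.1} =
      (⇑(vmap σ) : Function.End (ℝ × ℝ)) '' {p : ℝ × ℝ | p.2 = 0} := by
    ext r
    constructor
    · intro hr
      exact ⟨(r.1, 0), rfl, by show (r.1, (0:ℝ) + σ r.1) = r; rw [Set.mem_setOf_eq] at hr
                               rw [zero_add, ← hr]⟩
    · rintro ⟨s, hs, rfl⟩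
      rw [Set.mem_setOf_eq] at hs ⊢
      show s.2 + σ s.1 = σ s.1
      rw [hs, zero_add]
  rw [this]
  exact pos_line_mem _ (Submonoid.subset_closure (Set.mem_insert_of_mem _ rfl))

include hmono hodd in
lemma adiag_mem : {r : ℝ × ℝ | r.2 = -σ r.1} ∈ ratLines σ := by
  have : {r : ℝ × ℝ | r.2 = -σ r.1} =
      (⇑(hmap σ).symm : Function.End (ℝ × ℝ)) '' {p : ℝ × ℝ | p.1 = 0} := by
    ext r
    constructor
    · intro hr
      rw [Set.mem_setOf_eq] at hr
      refine ⟨(0, r.2), rfl, ?_⟩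
      show ((0:ℝ) - σ.symm r.2, r.2) = r
      have : σ.symm r.2 = -r.1 := by
        rw [hr, ← hodd, σ.symm_apply_apply]
      rw [this]; simp
    · rintro ⟨s, hs, rfl⟩
      rw [Set.mem_setOf_eq] at hs ⊢
      show s.2 = -σ (s.1 - σ.symm s.2)
      rw [hs, zero_sub, hodd, σ.apply_symm_apply, neg_neg]
  rw [this]
  exact neg_line_mem _ (Submonoid.subset_closure (Set.mem_insert _ _))

end Lines
section Steps

variable {σ : ℝ ≃ ℝ} (hmono : StrictMono σ) (hodd : ∀ x : ℝ, σ (-x) = -σ x)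

open scoped Classical in
lemma Facc_eqA {p : ℝ × ℝ} (hA : p ∈ Aset σ)
    (hn : ∃ n : ℕ, (⇑(hmap σ).symm)^[n] p ∈ Bset σ) :
    Facc σ p = (⇑(hmap σ).symm)^[Nat.find hn] p := by
  simp only [Facc]
  rw [if_pos hA, dif_pos hn]

open scoped Classical in
lemma Facc_eqB {p : ℝ × ℝ} (hA : p ∉ Aset σ) (hB : p ∈ Bset σ)
    (hn : ∃ n : ℕ, (⇑(vmap σ).symm)^[n] p ∈ Aset σ) :
    Facc σ p = (⇑(vmap σ).symm)^[Nat.find hn] p := by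
  simp only [Facc]
  rw [if_neg hA, if_pos hB, dif_pos hn]

open scoped Classical in
lemma Facc_eqC {p : ℝ × ℝ} (hA : p ∉ Aset σ) (hB : p ∉ Bset σ) (hC : p ∈ Cset σ)
    (hn : ∃ n : ℕ, (⇑(hmap σ))^[n] p ∈ Dset σ) :
    Facc σ p = (⇑(hmap σ))^[Nat.find hn] p := by
  simp only [Facc]
  rw [if_neg hA, if_neg hB, if_pos hC, dif_pos hn]

open scoped Classical in
lemma Facc_eqD {p : ℝ × ℝ} (hA : p ∉ Aset σ) (hB : p ∉ Bset σ) (hC : p ∉ Cset σ)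
    (hn : ∃ n : ℕ, (⇑(vmap σ))^[n] p ∈ Cset σ) :
    Facc σ p = (⇑(vmap σ))^[Nat.find hn] p := by
  simp only [Facc]
  rw [if_neg hA, if_neg hB, if_neg hC, dif_pos hn]

include hmono hodd in
lemma stepA {p : ℝ × ℝ} (hp : Irr σ p) (hx : 0 < p.1) (hy : 0 < p.2) (hlt : p.2 < σ p.1) :
    (Facc σ p).2 = p.2 ∧ 0 < (Facc σ p).1 ∧ σ (Facc σ p).1 < p.2 ∧
      (Facc σ p).1 + σ.symm p.2 ≤ p.1 ∧ Irr σ (Facc σ p) := by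
  classical
  set c := σ.symm p.2 with hc
  have hsc : σ c = p.2 := σ.apply_symm_apply p.2
  have hc0 : 0 < c := (symm_pos hmono hodd).2 hy
  have hcx : c < p.1 := by
    have := symm_mono hmono hlt
    rwa [σ.symm_apply_apply] at this
  have hA : p ∈ Aset σ := memA.2 ⟨by nlinarith, by intro h; rw [← hc] at h; linarith⟩
  have hex : ∃ n : ℕ, p.1 - (n : ℝ) * c < c := by
    obtain ⟨n, hn⟩ := exists_nat_gt ((p.1 - c) / c)
    rw [div_lt_iff₀ hc0] at hn
    exact ⟨n, by linarith⟩
  have hk₀spec : p.1 - (Nat.find hex : ℝ) * c < c := Nat.find_spec hex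
  obtain ⟨j, hj⟩ : ∃ j, Nat.find hex = j + 1 := by
    refine ⟨Nat.find hex - 1, ?_⟩
    have : Nat.find hex ≠ 0 := by
      intro h0
      rw [h0] at hk₀spec; push_cast at hk₀spec; linarith
    omega
  have hmin : ¬ (p.1 - (j : ℝ) * c < c) := Nat.find_min hex (by omega)
  push_neg at hmin
  rw [hj] at hk₀spec
  push_cast at hk₀spec
  have hge : 0 ≤ p.1 - ((j : ℝ) + 1) * c := by linarith
  have hne : p.1 - ((j : ℝ) + 1) * c ≠ 0 := by
    intro h0
    have hvmem : (⇑(vmap σ) : Function.End (ℝ × ℝ)) ∈ posM σ :=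
      Submonoid.subset_closure (Set.mem_insert_of_mem _ rfl)
    have hhmem : ((⇑(hmap σ))^[j] : Function.End (ℝ × ℝ)) ∈ posM σ :=
      iter_mem_closure _ _ (Set.mem_insert _ _) j
    apply hp _ (pos_line_mem _ (Submonoid.mul_mem (posM σ) hhmem hvmem))
    refine ⟨(c, 0), rfl, ?_⟩
    show (⇑(hmap σ))^[j] ((vmap σ) (c, 0)) = p
    have h1 : (vmap σ) (c, 0) = (c, p.2) := by
      show ((c : ℝ), 0 + σ c) = _
      rw [zero_add, hsc]
    rw [h1, h_iter]
    have : c + (j : ℝ) * c = p.1 := by linarith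
    rw [this]
  have hmem : (⇑(hmap σ).symm)^[j+1] p ∈ Bset σ := by
    rw [hs_iter, memB]
    have h1 : 0 < p.1 - ((j : ℝ) + 1) * c := lt_of_le_of_ne hge (Ne.symm hne)
    have h2 : σ (p.1 - ((j : ℝ) + 1) * c) < p.2 := by
      have := hmono (show p.1 - ((j : ℝ) + 1) * c < c by linarith)
      rwa [hsc] at this
    constructor
    · show 0 ≤ (p.1 - ((j : ℕ) + 1 : ℕ) * c) * (p.2 - σ (p.1 - ((j : ℕ) + 1 : ℕ) * c))
      push_cast
      nlinarith
    · show p.1 - ((j : ℕ) + 1 : ℕ) * c ≠ 0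
      push_cast
      exact hne
  have hn : ∃ n : ℕ, (⇑(hmap σ).symm)^[n] p ∈ Bset σ := ⟨j + 1, hmem⟩
  rw [Facc_eqA hA hn]
  set k := Nat.find hn with hk
  have hspec : (⇑(hmap σ).symm)^[k] p ∈ Bset σ := Nat.find_spec hn
  rw [hs_iter, memB] at hspec
  obtain ⟨hB1, hB2⟩ := hspec
  have hB1' : 0 ≤ (p.1 - (k : ℝ) * c) * (p.2 - σ (p.1 - (k : ℝ) * c)) := hB1
  have hB2' : p.1 - (k : ℝ) * c ≠ 0 := hB2
  -- positivity of first coordinate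
  have hq1 : 0 < p.1 - (k : ℝ) * c := by
    rcases lt_trichotomy (p.1 - (k : ℝ) * c) 0 with h | h | h
    · exfalso
      have hs1 : σ (p.1 - (k : ℝ) * c) < 0 := by
        have h2 : 0 < σ (-(p.1 - (k : ℝ) * c)) := (sig_pos hmono hodd).2 (by linarith)
        rw [hodd] at h2; linarith
      nlinarith
    · exact absurd h hB2'
    · exact h
  have hkpos : 1 ≤ k := by
    by_contra hk0
    push_neg at hk0
    have h0 : k = 0 := by omega
    rw [h0] at hB1'
    norm_num at hB1'
    nlinarith
  have hsle : σ (p.1 - (k : ℝ) * c) ≤ p.2 := by nlinarith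
  have hqeq : (⇑(hmap σ).symm)^[k] p = (p.1 - (k : ℝ) * c, p.2) := hs_iter k
  rw [hqeq]
  have hirr : Irr σ ((p.1 - (k : ℝ) * c, p.2) : ℝ × ℝ) := by
    refine irr_of_pos hmono hodd hp
      (m := ((⇑(hmap σ))^[k] : Function.End (ℝ × ℝ)))
      (iter_mem_closure _ _ (Set.mem_insert _ _) k) ?_ ?_
    · show (⇑(hmap σ))^[k] ((p.1 - (k : ℝ) * c, p.2) : ℝ × ℝ) = p
      rw [h_iter]
      show (p.1 - (k : ℝ) * c + (k : ℝ) * c, p.2) = p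
      rw [sub_add_cancel]
    · show 0 < (p.1 - (k : ℝ) * c) * p.2
      nlinarith
  have hstrict : σ (p.1 - (k : ℝ) * c) < p.2 := by
    rcases hsle.lt_or_eq with h | h
    · exact h
    · exfalso
      exact hirr _ (diag_mem hmono hodd) (by rw [Set.mem_setOf_eq]; exact h.symm)
  refine ⟨rfl, hq1, hstrict, ?_, hirr⟩
  show p.1 - (k : ℝ) * c + c ≤ p.1
  have : (1 : ℝ) ≤ (k : ℝ) := by exact_mod_cast hkpos
  nlinarith


lemma hgen_mem : (⇑(hmap σ) : Function.End (ℝ × ℝ)) ∈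
    ({(⇑(hmap σ) : Function.End (ℝ × ℝ)), ⇑(vmap σ)} : Set (Function.End (ℝ × ℝ))) :=
  Set.mem_insert _ _

lemma vgen_mem : (⇑(vmap σ) : Function.End (ℝ × ℝ)) ∈
    ({(⇑(hmap σ) : Function.End (ℝ × ℝ)), ⇑(vmap σ)} : Set (Function.End (ℝ × ℝ))) :=
  Set.mem_insert_of_mem _ rfl

lemma hsgen_mem : (⇑(hmap σ).symm : Function.End (ℝ × ℝ)) ∈
    ({(⇑(hmap σ).symm : Function.End (ℝ × ℝ)), ⇑(vmap σ).symm} : Set (Function.End (ℝ × ℝ))) :=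
  Set.mem_insert _ _

lemma vsgen_mem : (⇑(vmap σ).symm : Function.End (ℝ × ℝ)) ∈
    ({(⇑(hmap σ).symm : Function.End (ℝ × ℝ)), ⇑(vmap σ).symm} : Set (Function.End (ℝ × ℝ))) :=
  Set.mem_insert_of_mem _ rfl

lemma hiter_mem (k : ℕ) : ((⇑(hmap σ))^[k] : Function.End (ℝ × ℝ)) ∈ posM σ :=
  iter_mem_closure _ _ hgen_mem k

lemma viter_mem (k : ℕ) : ((⇑(vmap σ))^[k] : Function.End (ℝ × ℝ)) ∈ posM σ :=
  iter_mem_closure _ _ vgen_mem k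

lemma hsiter_mem (k : ℕ) : ((⇑(hmap σ).symm)^[k] : Function.End (ℝ × ℝ)) ∈ negM σ :=
  iter_mem_closure _ _ hsgen_mem k

lemma vsiter_mem (k : ℕ) : ((⇑(vmap σ).symm)^[k] : Function.End (ℝ × ℝ)) ∈ negM σ :=
  iter_mem_closure _ _ vsgen_mem k

include hmono hodd in
lemma stepB {p : ℝ × ℝ} (hp : Irr σ p) (hx : 0 < p.1) (hlt : σ p.1 < p.2) :
    (Facc σ p).1 = p.1 ∧ 0 < (Facc σ p).2 ∧ (Facc σ p).2 < σ p.1 ∧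
      (Facc σ p).2 + σ p.1 ≤ p.2 ∧ Irr σ (Facc σ p) := by
  classical
  set d := σ p.1 with hdd
  have hd0 : 0 < d := (sig_pos hmono hodd).2 hx
  have hy : 0 < p.2 := lt_trans hd0 hlt
  set c := σ.symm p.2 with hc
  have hxc : p.1 < c := by
    have := symm_mono hmono hlt
    rwa [σ.symm_apply_apply] at this
  have hA' : p ∉ Aset σ := by
    intro hA
    obtain ⟨h1, -⟩ := memA.1 hA
    rw [← hc] at h1
    nlinarith
  have hB : p ∈ Bset σ := memB.2 ⟨by nlinarith, hx.ne'⟩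
  have hex : ∃ n : ℕ, p.2 - (n : ℝ) * d < d := by
    obtain ⟨n, hn⟩ := exists_nat_gt ((p.2 - d) / d)
    rw [div_lt_iff₀ hd0] at hn
    exact ⟨n, by linarith⟩
  have hk₀spec : p.2 - (Nat.find hex : ℝ) * d < d := Nat.find_spec hex
  obtain ⟨j, hj⟩ : ∃ j, Nat.find hex = j + 1 := by
    refine ⟨Nat.find hex - 1, ?_⟩
    have : Nat.find hex ≠ 0 := by
      intro h0
      rw [h0] at hk₀spec; push_cast at hk₀spec; linarith
    omega
  have hmin : ¬ (p.2 - (j : ℝ) * d < d) := Nat.find_min hex (by omega)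
  push_neg at hmin
  rw [hj] at hk₀spec
  push_cast at hk₀spec
  have hge : 0 ≤ p.2 - ((j : ℝ) + 1) * d := by linarith
  have hne : p.2 - ((j : ℝ) + 1) * d ≠ 0 := by
    intro h0
    have hvmem : ((⇑(vmap σ))^[j+1] : Function.End (ℝ × ℝ)) ∈ posM σ := viter_mem (j+1)
    apply hp _ (pos_line_mem _ hvmem)
    refine ⟨(p.1, 0), rfl, ?_⟩
    show (⇑(vmap σ))^[j+1] ((p.1, 0) : ℝ × ℝ) = p
    rw [v_iter]
    show ((p.1 : ℝ), 0 + ((j:ℕ)+1 : ℕ) * σ p.1) = p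
    have : (0 : ℝ) + ((j:ℕ)+1 : ℕ) * σ p.1 = p.2 := by push_cast; linarith
    rw [this]
  have hmem : (⇑(vmap σ).symm)^[j+1] p ∈ Aset σ := by
    rw [vs_iter, memA]
    have h1 : 0 < p.2 - ((j : ℝ) + 1) * d := lt_of_le_of_ne hge (Ne.symm hne)
    have h2 : σ.symm (p.2 - ((j : ℝ) + 1) * d) < p.1 := by
      have h3 := symm_mono hmono (show p.2 - ((j : ℝ) + 1) * d < d by linarith)
      rwa [hdd, σ.symm_apply_apply] at h3
    constructor
    · show 0 ≤ (p.1 - σ.symm (p.2 - ((j:ℕ)+1 : ℕ) * d)) * (p.2 - ((j:ℕ)+1 : ℕ) * d)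
      push_cast
      nlinarith
    · show p.1 - σ.symm (p.2 - ((j:ℕ)+1 : ℕ) * d) ≠ 0
      push_cast
      intro h
      nlinarith
  have hn : ∃ n : ℕ, (⇑(vmap σ).symm)^[n] p ∈ Aset σ := ⟨j + 1, hmem⟩
  rw [Facc_eqB hA' hB hn]
  set k := Nat.find hn with hk
  have hspec : (⇑(vmap σ).symm)^[k] p ∈ Aset σ := Nat.find_spec hn
  rw [vs_iter, memA] at hspec
  have hB1' : 0 ≤ (p.1 - σ.symm (p.2 - (k : ℝ) * d)) * (p.2 - (k : ℝ) * d) := hspec.1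
  have hB2' : p.1 - σ.symm (p.2 - (k : ℝ) * d) ≠ 0 := hspec.2
  have hyne : p.2 - (k : ℝ) * d ≠ 0 := by
    intro h0
    have hvmem : ((⇑(vmap σ))^[k] : Function.End (ℝ × ℝ)) ∈ posM σ := viter_mem k
    apply hp _ (pos_line_mem _ hvmem)
    refine ⟨(p.1, 0), rfl, ?_⟩
    show (⇑(vmap σ))^[k] ((p.1, 0) : ℝ × ℝ) = p
    rw [v_iter]
    show ((p.1 : ℝ), 0 + (k : ℝ) * σ p.1) = p
    have : (0 : ℝ) + (k : ℝ) * σ p.1 = p.2 := by linarith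
    rw [this]
  have hq2 : 0 < p.2 - (k : ℝ) * d := by
    rcases lt_trichotomy (p.2 - (k : ℝ) * d) 0 with h | h | h
    · exfalso
      have hs1 : σ.symm (p.2 - (k : ℝ) * d) < 0 := by
        have h2 : 0 < σ.symm (-(p.2 - (k : ℝ) * d)) := (symm_pos hmono hodd).2 (by linarith)
        rw [symm_odd hodd] at h2; linarith
      nlinarith
    · exact absurd h hyne
    · exact h
  have hkpos : 1 ≤ k := by
    by_contra hk0
    push_neg at hk0
    have h0 : k = 0 := by omega
    rw [h0] at hB1'
    norm_num at hB1'
    rw [← hc] at hB1'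
    nlinarith
  have hfac : 0 < p.1 - σ.symm (p.2 - (k : ℝ) * d) := by
    rcases lt_trichotomy (p.1 - σ.symm (p.2 - (k : ℝ) * d)) 0 with h | h | h
    · exfalso; nlinarith
    · exact absurd h hB2'
    · exact h
  have hlt' : p.2 - (k : ℝ) * d < σ p.1 := by
    have := hmono (show σ.symm (p.2 - (k : ℝ) * d) < p.1 by linarith)
    rwa [σ.apply_symm_apply] at this
  have hqeq : (⇑(vmap σ).symm)^[k] p = (p.1, p.2 - (k : ℝ) * d) := vs_iter k
  rw [hqeq]
  have hirr : Irr σ ((p.1, p.2 - (k : ℝ) * d) : ℝ × ℝ) := by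
    refine irr_of_pos hmono hodd hp
      (m := ((⇑(vmap σ))^[k] : Function.End (ℝ × ℝ)))
      (viter_mem k) ?_ ?_
    · show (⇑(vmap σ))^[k] ((p.1, p.2 - (k : ℝ) * d) : ℝ × ℝ) = p
      rw [v_iter]
      show ((p.1 : ℝ), p.2 - (k : ℝ) * d + (k : ℝ) * σ p.1) = p
      rw [← hdd]
      have : p.2 - (k : ℝ) * d + (k : ℝ) * d = p.2 := by ring
      rw [this]
    · show 0 < p.1 * (p.2 - (k : ℝ) * d)
      nlinarith
  refine ⟨rfl, hq2, hlt', ?_, hirr⟩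
  show p.2 - (k : ℝ) * d + σ p.1 ≤ p.2
  have : (1 : ℝ) ≤ (k : ℝ) := by exact_mod_cast hkpos
  rw [← hdd]
  nlinarith


include hmono hodd in
lemma stepC {p : ℝ × ℝ} (hp : Irr σ p) (hy : 0 < p.2) (hlt : p.2 < -σ p.1) :
    (Facc σ p).2 = p.2 ∧ (Facc σ p).1 < 0 ∧ -σ (Facc σ p).1 < p.2 ∧
      p.1 + σ.symm p.2 ≤ (Facc σ p).1 ∧ Irr σ (Facc σ p) := by
  classical
  set c := σ.symm p.2 with hc
  have hsc : σ c = p.2 := σ.apply_symm_apply p.2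
  have hc0 : 0 < c := (symm_pos hmono hodd).2 hy
  have hsnc : σ (-c) = -p.2 := by rw [hodd, hsc]
  have hxc : p.1 < -c := by
    have h1 : σ p.1 < σ (-c) := by rw [hsnc]; linarith
    exact hmono.lt_iff_lt.1 h1
  have hsx : σ p.1 < 0 := by
    have := hmono hxc; rw [hsnc] at this; linarith
  have hA' : p ∉ Aset σ := by
    intro hA
    obtain ⟨h1, -⟩ := memA.1 hA
    rw [← hc] at h1
    nlinarith
  have hB' : p ∉ Bset σ := by
    intro hB
    obtain ⟨h1, -⟩ := memB.1 hB
    nlinarith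
  have hC : p ∈ Cset σ := memC.2 ⟨by rw [← hc]; nlinarith, hy.ne'⟩
  have hex : ∃ n : ℕ, -c < p.1 + (n : ℝ) * c := by
    obtain ⟨n, hn⟩ := exists_nat_gt ((-c - p.1) / c)
    rw [div_lt_iff₀ hc0] at hn
    exact ⟨n, by linarith⟩
  have hk₀spec : -c < p.1 + (Nat.find hex : ℝ) * c := Nat.find_spec hex
  obtain ⟨j, hj⟩ : ∃ j, Nat.find hex = j + 1 := by
    refine ⟨Nat.find hex - 1, ?_⟩
    have : Nat.find hex ≠ 0 := by
      intro h0
      rw [h0] at hk₀spec; push_cast at hk₀spec; linarith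
    omega
  have hmin : ¬ (-c < p.1 + (j : ℝ) * c) := Nat.find_min hex (by omega)
  push_neg at hmin
  rw [hj] at hk₀spec
  push_cast at hk₀spec
  have hge : p.1 + ((j : ℝ) + 1) * c ≤ 0 := by linarith
  have hne : p.1 + ((j : ℝ) + 1) * c ≠ 0 := by
    intro h0
    have hm : ((⇑(hmap σ).symm)^[j+1] : Function.End (ℝ × ℝ)) ∈ negM σ := hsiter_mem (j+1)
    apply hp _ (neg_line_mem _ hm)
    refine ⟨(0, p.2), rfl, ?_⟩
    show (⇑(hmap σ).symm)^[j+1] ((0, p.2) : ℝ × ℝ) = p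
    rw [hs_iter]
    show ((0 : ℝ) - ((j:ℕ)+1 : ℕ) * σ.symm p.2, p.2) = p
    have : (0 : ℝ) - ((j:ℕ)+1 : ℕ) * σ.symm p.2 = p.1 := by push_cast; rw [← hc]; linarith
    rw [this]
  have hmem : (⇑(hmap σ))^[j+1] p ∈ Dset σ := by
    rw [h_iter, memD]
    have h1 : p.1 + ((j : ℝ) + 1) * c < 0 := lt_of_le_of_ne hge hne
    have h2 : -p.2 < σ (p.1 + ((j : ℝ) + 1) * c) := by
      have := hmono (show -c < p.1 + ((j : ℝ) + 1) * c by linarith)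
      rwa [hsnc] at this
    constructor
    · show (p.1 + ((j:ℕ)+1 : ℕ) * c) * (p.2 + σ (p.1 + ((j:ℕ)+1 : ℕ) * c)) ≤ 0
      push_cast
      nlinarith
    · show p.2 + σ (p.1 + ((j:ℕ)+1 : ℕ) * c) ≠ 0
      push_cast
      intro h
      nlinarith
  have hn : ∃ n : ℕ, (⇑(hmap σ))^[n] p ∈ Dset σ := ⟨j + 1, hmem⟩
  rw [Facc_eqC hA' hB' hC hn]
  set k := Nat.find hn with hk
  have hspec : (⇑(hmap σ))^[k] p ∈ Dset σ := Nat.find_spec hn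
  rw [h_iter, memD] at hspec
  have hB1' : (p.1 + (k : ℝ) * c) * (p.2 + σ (p.1 + (k : ℝ) * c)) ≤ 0 := hspec.1
  have hB2' : p.2 + σ (p.1 + (k : ℝ) * c) ≠ 0 := hspec.2
  have hxne : p.1 + (k : ℝ) * c ≠ 0 := by
    intro h0
    have hm : ((⇑(hmap σ).symm)^[k] : Function.End (ℝ × ℝ)) ∈ negM σ := hsiter_mem k
    apply hp _ (neg_line_mem _ hm)
    refine ⟨(0, p.2), rfl, ?_⟩
    show (⇑(hmap σ).symm)^[k] ((0, p.2) : ℝ × ℝ) = p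
    rw [hs_iter]
    show ((0 : ℝ) - (k : ℝ) * σ.symm p.2, p.2) = p
    have : (0 : ℝ) - (k : ℝ) * σ.symm p.2 = p.1 := by rw [← hc]; linarith
    rw [this]
  have hq1 : p.1 + (k : ℝ) * c < 0 := by
    rcases lt_trichotomy (p.1 + (k : ℝ) * c) 0 with h | h | h
    · exact h
    · exact absurd h hxne
    · exfalso
      have hs1 : 0 < σ (p.1 + (k : ℝ) * c) := (sig_pos hmono hodd).2 h
      nlinarith
  have hkpos : 1 ≤ k := by
    by_contra hk0
    push_neg at hk0
    have h0 : k = 0 := by omega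
    rw [h0] at hB1'
    norm_num at hB1'
    nlinarith
  have hsge : 0 ≤ p.2 + σ (p.1 + (k : ℝ) * c) := by nlinarith
  have hsgt : 0 < p.2 + σ (p.1 + (k : ℝ) * c) := lt_of_le_of_ne hsge (Ne.symm hB2')
  have hqeq : (⇑(hmap σ))^[k] p = (p.1 + (k : ℝ) * c, p.2) := h_iter k
  rw [hqeq]
  have hirr : Irr σ ((p.1 + (k : ℝ) * c, p.2) : ℝ × ℝ) := by
    refine irr_of_neg hmono hodd hp (m := ((⇑(hmap σ).symm)^[k] : Function.End (ℝ × ℝ)))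
      (hsiter_mem k) ?_ ?_
    · show (⇑(hmap σ).symm)^[k] ((p.1 + (k : ℝ) * c, p.2) : ℝ × ℝ) = p
      rw [hs_iter]
      show (p.1 + (k : ℝ) * c - (k : ℝ) * σ.symm p.2, p.2) = p
      rw [← hc]
      have : p.1 + (k : ℝ) * c - (k : ℝ) * c = p.1 := by ring
      rw [this]
    · show (p.1 + (k : ℝ) * c) * p.2 < 0
      nlinarith
  refine ⟨rfl, hq1, by linarith, ?_, hirr⟩
  show p.1 + σ.symm p.2 ≤ p.1 + (k : ℝ) * c
  have : (1 : ℝ) ≤ (k : ℝ) := by exact_mod_cast hkpos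
  rw [← hc]
  nlinarith

include hmono hodd in
lemma stepD {p : ℝ × ℝ} (hp : Irr σ p) (hx : p.1 < 0) (hlt : -σ p.1 < p.2) :
    (Facc σ p).1 = p.1 ∧ 0 < (Facc σ p).2 ∧ (Facc σ p).2 < -σ p.1 ∧
      (Facc σ p).2 + (-σ p.1) ≤ p.2 ∧ Irr σ (Facc σ p) := by
  classical
  have hsx : σ p.1 < 0 := by
    have h2 : 0 < σ (-p.1) := (sig_pos hmono hodd).2 (by linarith)
    rw [hodd] at h2; linarith
  set d := -σ p.1 with hdd
  have hd0 : 0 < d := by rw [hdd]; linarith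
  have hy : 0 < p.2 := lt_trans hd0 hlt
  set c := σ.symm p.2 with hc
  have hc0 : 0 < c := (symm_pos hmono hodd).2 hy
  have hsd : σ (-p.1) = d := by rw [hodd]
  have hdc : -p.1 < c := by
    have h1 : σ (-p.1) < σ c := by rw [hsd, hc, σ.apply_symm_apply]; linarith
    exact hmono.lt_iff_lt.1 h1
  have hsymd : σ.symm d = -p.1 := by rw [← hsd, σ.symm_apply_apply]
  have hA' : p ∉ Aset σ := by
    intro hA
    obtain ⟨h1, -⟩ := memA.1 hA
    rw [← hc] at h1
    nlinarith
  have hB' : p ∉ Bset σ := by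
    intro hB
    obtain ⟨h1, -⟩ := memB.1 hB
    nlinarith
  have hC' : p ∉ Cset σ := by
    intro hCm
    obtain ⟨h1, -⟩ := memC.1 hCm
    rw [← hc] at h1
    nlinarith
  have hex : ∃ n : ℕ, p.2 - (n : ℝ) * d < d := by
    obtain ⟨n, hn⟩ := exists_nat_gt ((p.2 - d) / d)
    rw [div_lt_iff₀ hd0] at hn
    exact ⟨n, by linarith⟩
  have hk₀spec : p.2 - (Nat.find hex : ℝ) * d < d := Nat.find_spec hex
  obtain ⟨j, hj⟩ : ∃ j, Nat.find hex = j + 1 := by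
    refine ⟨Nat.find hex - 1, ?_⟩
    have : Nat.find hex ≠ 0 := by
      intro h0
      rw [h0] at hk₀spec; push_cast at hk₀spec; linarith
    omega
  have hmin : ¬ (p.2 - (j : ℝ) * d < d) := Nat.find_min hex (by omega)
  push_neg at hmin
  rw [hj] at hk₀spec
  push_cast at hk₀spec
  have hge : 0 ≤ p.2 - ((j : ℝ) + 1) * d := by linarith
  have hne : p.2 - ((j : ℝ) + 1) * d ≠ 0 := by
    intro h0
    have hm1 : ((⇑(vmap σ).symm)^[j] : Function.End (ℝ × ℝ)) ∈ negM σ := vsiter_mem j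
    have hm2 : (⇑(hmap σ).symm : Function.End (ℝ × ℝ)) ∈ negM σ :=
      Submonoid.subset_closure hsgen_mem
    apply hp _ (neg_line_mem _ (Submonoid.mul_mem (negM σ) hm1 hm2))
    refine ⟨(0, d), rfl, ?_⟩
    show (⇑(vmap σ).symm)^[j] ((hmap σ).symm ((0, d) : ℝ × ℝ)) = p
    have h1 : (hmap σ).symm ((0, d) : ℝ × ℝ) = (p.1, d) := by
      show ((0 : ℝ) - σ.symm d, d) = _
      rw [hsymd]; norm_num
    rw [h1, vs_iter]
    show ((p.1 : ℝ), d - (j : ℝ) * σ p.1) = p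
    have : d - (j : ℝ) * σ p.1 = p.2 := by rw [hdd] at h0 ⊢; push_cast at h0 ⊢; linarith
    rw [this]
  have hmem : (⇑(vmap σ))^[j+1] p ∈ Cset σ := by
    rw [v_iter, memC]
    have h1 : 0 < p.2 - ((j : ℝ) + 1) * d := lt_of_le_of_ne hge (Ne.symm hne)
    have h2 : σ.symm (p.2 - ((j : ℝ) + 1) * d) < -p.1 := by
      have h3 := symm_mono hmono (show p.2 - ((j : ℝ) + 1) * d < d by linarith)
      rwa [hsymd] at h3
    have heq : p.2 + ((j:ℝ)+1) * σ p.1 = p.2 - ((j : ℝ) + 1) * d := by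
      rw [hdd]; ring
    constructor
    · show (p.1 + σ.symm (p.2 + ((j:ℕ)+1 : ℕ) * σ p.1)) * (p.2 + ((j:ℕ)+1 : ℕ) * σ p.1) ≤ 0
      push_cast
      rw [heq]
      nlinarith
    · show p.2 + ((j:ℕ)+1 : ℕ) * σ p.1 ≠ 0
      push_cast
      rw [heq]
      exact hne
  have hn : ∃ n : ℕ, (⇑(vmap σ))^[n] p ∈ Cset σ := ⟨j + 1, hmem⟩
  rw [Facc_eqD hA' hB' hC' hn]
  set k := Nat.find hn with hk
  have hspec : (⇑(vmap σ))^[k] p ∈ Cset σ := Nat.find_spec hn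
  rw [v_iter, memC] at hspec
  have hB1' : (p.1 + σ.symm (p.2 + (k : ℝ) * σ p.1)) * (p.2 + (k : ℝ) * σ p.1) ≤ 0 := hspec.1
  have hB2' : p.2 + (k : ℝ) * σ p.1 ≠ 0 := hspec.2
  set y := p.2 + (k : ℝ) * σ p.1 with hyy
  have hyd : y = p.2 - (k : ℝ) * d := by rw [hyy, hdd]; ring
  have hq2 : 0 < y := by
    rcases lt_trichotomy y 0 with h | h | h
    · exfalso
      have hs1 : σ.symm y < 0 := by
        have h2 : 0 < σ.symm (-y) := (symm_pos hmono hodd).2 (by linarith)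
        rw [symm_odd hodd] at h2; linarith
      nlinarith
    · exact absurd h hB2'
    · exact h
  have hkpos : 1 ≤ k := by
    by_contra hk0
    push_neg at hk0
    have h0 : k = 0 := by omega
    have hy0 : y = p.2 := by rw [hyd, h0]; norm_num
    rw [hy0, ← hc] at hB1'
    nlinarith
  have hfac : p.1 + σ.symm y ≤ 0 := by nlinarith
  have hqeq : (⇑(vmap σ))^[k] p = (p.1, y) := v_iter k
  rw [hqeq]
  have hirr : Irr σ ((p.1, y) : ℝ × ℝ) := by
    refine irr_of_neg hmono hodd hp (m := ((⇑(vmap σ).symm)^[k] : Function.End (ℝ × ℝ)))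
      (vsiter_mem k) ?_ ?_
    · show (⇑(vmap σ).symm)^[k] ((p.1, y) : ℝ × ℝ) = p
      rw [vs_iter]
      show ((p.1 : ℝ), y - (k : ℝ) * σ p.1) = p
      have : y - (k : ℝ) * σ p.1 = p.2 := by rw [hyy]; ring
      rw [this]
    · show p.1 * y < 0
      nlinarith
  have hstrict : y < d := by
    rcases hfac.lt_or_eq with h | h
    · have h2 : σ.symm y < -p.1 := by linarith
      have h3 := hmono h2
      rwa [σ.apply_symm_apply, hsd] at h3
    · exfalso
      have hyeq : y = -σ p.1 := by
        have h4 : σ.symm y = -p.1 := by linarith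
        have h5 := congrArg σ h4
        rw [σ.apply_symm_apply, hodd] at h5
        exact h5
      exact hirr _ (adiag_mem hmono hodd) (by rw [Set.mem_setOf_eq]; exact hyeq)
  refine ⟨rfl, hq2, hstrict, ?_, hirr⟩
  show y + d ≤ p.2
  have h1 : (1 : ℝ) ≤ (k : ℝ) := by exact_mod_cast hkpos
  rw [hyd]
  nlinarith


include hodd in
lemma negA {p : ℝ × ℝ} : (-p) ∈ Aset σ ↔ p ∈ Aset σ := by
  rw [memA, memA]
  have e1 : (-p).1 = -p.1 := rfl
  have e2 : (-p).2 = -p.2 := rfl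
  rw [e1, e2, symm_odd hodd]
  constructor
  · rintro ⟨h1, h2⟩
    exact ⟨by nlinarith, fun h => h2 (by linarith)⟩
  · rintro ⟨h1, h2⟩
    exact ⟨by nlinarith, fun h => h2 (by linarith)⟩

include hodd in
lemma negB {p : ℝ × ℝ} : (-p) ∈ Bset σ ↔ p ∈ Bset σ := by
  rw [memB, memB]
  have e1 : (-p).1 = -p.1 := rfl
  have e2 : (-p).2 = -p.2 := rfl
  rw [e1, e2, hodd]
  constructor
  · rintro ⟨h1, h2⟩
    exact ⟨by nlinarith, fun h => h2 (by linarith)⟩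
  · rintro ⟨h1, h2⟩
    exact ⟨by nlinarith, fun h => h2 (by linarith)⟩

include hodd in
lemma negC {p : ℝ × ℝ} : (-p) ∈ Cset σ ↔ p ∈ Cset σ := by
  rw [memC, memC]
  have e1 : (-p).1 = -p.1 := rfl
  have e2 : (-p).2 = -p.2 := rfl
  rw [e1, e2, symm_odd hodd]
  constructor
  · rintro ⟨h1, h2⟩
    exact ⟨by nlinarith, fun h => h2 (by linarith)⟩
  · rintro ⟨h1, h2⟩
    exact ⟨by nlinarith, fun h => h2 (by linarith)⟩

include hodd in
lemma negD {p : ℝ × ℝ} : (-p) ∈ Dset σ ↔ p ∈ Dset σ := by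
  rw [memD, memD]
  have e1 : (-p).1 = -p.1 := rfl
  have e2 : (-p).2 = -p.2 := rfl
  rw [e1, e2, hodd]
  constructor
  · rintro ⟨h1, h2⟩
    exact ⟨by nlinarith, fun h => h2 (by linarith)⟩
  · rintro ⟨h1, h2⟩
    exact ⟨by nlinarith, fun h => h2 (by linarith)⟩

include hodd in
lemma hs_iter_neg {p : ℝ × ℝ} (n : ℕ) :
    (⇑(hmap σ).symm)^[n] (-p) = -((⇑(hmap σ).symm)^[n] p) := by
  rw [hs_iter, hs_iter]
  have e1 : (-p).1 = -p.1 := rfl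
  have e2 : (-p).2 = -p.2 := rfl
  rw [e1, e2, symm_odd hodd, Prod.neg_mk]
  exact Prod.ext (by ring) rfl

include hodd in
lemma h_iter_neg {p : ℝ × ℝ} (n : ℕ) :
    (⇑(hmap σ))^[n] (-p) = -((⇑(hmap σ))^[n] p) := by
  rw [h_iter, h_iter]
  have e1 : (-p).1 = -p.1 := rfl
  have e2 : (-p).2 = -p.2 := rfl
  rw [e1, e2, symm_odd hodd, Prod.neg_mk]
  exact Prod.ext (by ring) rfl

include hodd in
lemma vs_iter_neg {p : ℝ × ℝ} (n : ℕ) :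
    (⇑(vmap σ).symm)^[n] (-p) = -((⇑(vmap σ).symm)^[n] p) := by
  rw [vs_iter, vs_iter]
  have e1 : (-p).1 = -p.1 := rfl
  have e2 : (-p).2 = -p.2 := rfl
  rw [e1, e2, hodd, Prod.neg_mk]
  exact Prod.ext rfl (by ring)

include hodd in
lemma v_iter_neg {p : ℝ × ℝ} (n : ℕ) :
    (⇑(vmap σ))^[n] (-p) = -((⇑(vmap σ))^[n] p) := by
  rw [v_iter, v_iter]
  have e1 : (-p).1 = -p.1 := rfl
  have e2 : (-p).2 = -p.2 := rfl
  rw [e1, e2, hodd, Prod.neg_mk]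
  exact Prod.ext rfl (by ring)

lemma find_congr' {P Q : ℕ → Prop} [DecidablePred P] [DecidablePred Q]
    (hPQ : ∀ n, P n ↔ Q n) (hP : ∃ n, P n) (hQ : ∃ n, Q n) :
    Nat.find hP = Nat.find hQ :=
  le_antisymm (Nat.find_le ((hPQ _).2 (Nat.find_spec hQ)))
    (Nat.find_le ((hPQ _).1 (Nat.find_spec hP)))

open scoped Classical in
lemma branch_neg (f : ℝ × ℝ → ℝ × ℝ) (S : Set (ℝ × ℝ))
    (hfneg : ∀ (n : ℕ) (r : ℝ × ℝ), f^[n] (-r) = -(f^[n] r))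
    (hS : ∀ r : ℝ × ℝ, -r ∈ S ↔ r ∈ S) (p : ℝ × ℝ) :
    (if hn : ∃ n : ℕ, f^[n] (-p) ∈ S then f^[Nat.find hn] (-p) else -p)
      = -(if hn : ∃ n : ℕ, f^[n] p ∈ S then f^[Nat.find hn] p else p) := by
  by_cases hn : ∃ n : ℕ, f^[n] p ∈ S
  · have hn' : ∃ n : ℕ, f^[n] (-p) ∈ S := by
      obtain ⟨n, h⟩ := hn
      exact ⟨n, by rw [hfneg]; exact (hS _).2 h⟩
    rw [dif_pos hn, dif_pos hn']
    have heq : Nat.find hn' = Nat.find hn :=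
      find_congr' (fun n => by rw [hfneg]; exact hS _) hn' hn
    rw [heq, hfneg]
  · have hn' : ¬ ∃ n : ℕ, f^[n] (-p) ∈ S := by
      rintro ⟨n, h⟩
      exact hn ⟨n, (hS _).1 (by rwa [hfneg] at h)⟩
    rw [dif_neg hn, dif_neg hn']

include hodd in
lemma Facc_neg (p : ℝ × ℝ) : Facc σ (-p) = -(Facc σ p) := by
  simp only [Facc]
  by_cases hA : p ∈ Aset σ
  · rw [if_pos hA, if_pos ((negA hodd).2 hA)]
    exact branch_neg _ _ (fun n r => hs_iter_neg hodd n) (fun r => negB hodd) p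
  · rw [if_neg hA, if_neg (fun h => hA ((negA hodd).1 h))]
    by_cases hB : p ∈ Bset σ
    · rw [if_pos hB, if_pos ((negB hodd).2 hB)]
      exact branch_neg _ _ (fun n r => vs_iter_neg hodd n) (fun r => negA hodd) p
    · rw [if_neg hB, if_neg (fun h => hB ((negB hodd).1 h))]
      by_cases hC : p ∈ Cset σ
      · rw [if_pos hC, if_pos ((negC hodd).2 hC)]
        exact branch_neg _ _ (fun n r => h_iter_neg hodd n) (fun r => negD hodd) p
      · rw [if_neg hC, if_neg (fun h => hC ((negC hodd).1 h))]
        exact branch_neg _ _ (fun n r => v_iter_neg hodd n) (fun r => negC hodd) p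

include hmono hodd in
lemma dblQ1 {p : ℝ × ℝ} (hp : Irr σ p) (hx : 0 < p.1) (hy : 0 < p.2) :
    Irr σ (Facc σ (Facc σ p)) ∧ 0 < (Facc σ (Facc σ p)).1 ∧ 0 < (Facc σ (Facc σ p)).2 ∧
      (Facc σ (Facc σ p)).1 + (Facc σ (Facc σ p)).2 ≤ (p.1 + p.2) / 2 := by
  rcases lt_trichotomy p.2 (σ p.1) with h | h | h
  · obtain ⟨e2, hq1pos, hqlt, hsum1, hirr1⟩ := stepA hmono hodd hp hx hy h
    obtain ⟨e1', hq2pos, hq2lt, hsum2, hirr2⟩ :=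
      stepB hmono hodd hirr1 hq1pos (by rw [e2]; exact hqlt)
    have hq1c : (Facc σ p).1 < σ.symm p.2 := by
      have := symm_mono hmono hqlt
      rwa [σ.symm_apply_apply] at this
    rw [e2] at hsum2
    refine ⟨hirr2, by rw [e1']; exact hq1pos, hq2pos, ?_⟩
    rw [e1']
    linarith
  · exact (hp _ (diag_mem hmono hodd) (show p ∈ {r : ℝ × ℝ | r.2 = σ r.1} from h)).elim
  · obtain ⟨e1, hq2pos, hq2lt, hsum1, hirr1⟩ := stepB hmono hodd hp hx h
    obtain ⟨e2', hq1pos, hq1lt, hsum2, hirr2⟩ :=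
      stepA hmono hodd hirr1 (by rw [e1]; exact hx) hq2pos (by rw [e1]; exact hq2lt)
    have hq1c : (Facc σ (Facc σ p)).1 < σ.symm (Facc σ p).2 := by
      have := symm_mono hmono hq1lt
      rwa [σ.symm_apply_apply] at this
    rw [e1] at hsum2
    refine ⟨hirr2, hq1pos, by rw [e2']; exact hq2pos, ?_⟩
    rw [e2']
    linarith


include hmono hodd in
lemma dblQ2 {p : ℝ × ℝ} (hp : Irr σ p) (hx : p.1 < 0) (hy : 0 < p.2) :
    Irr σ (Facc σ (Facc σ p)) ∧ (Facc σ (Facc σ p)).1 < 0 ∧ 0 < (Facc σ (Facc σ p)).2 ∧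
      -(Facc σ (Facc σ p)).1 + (Facc σ (Facc σ p)).2 ≤ (-p.1 + p.2) / 2 := by
  rcases lt_trichotomy p.2 (-σ p.1) with h | h | h
  · obtain ⟨e2, hq1neg, hqlt, hsum1, hirr1⟩ := stepC hmono hodd hp hy h
    obtain ⟨e1', hq2pos, hq2lt, hsum2, hirr2⟩ :=
      stepD hmono hodd hirr1 hq1neg (by rw [e2]; exact hqlt)
    have hq1c : -(Facc σ p).1 < σ.symm p.2 := by
      have h1 : σ (-(Facc σ p).1) < σ (σ.symm p.2) := by
        rw [hodd, σ.apply_symm_apply]; linarith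
      exact hmono.lt_iff_lt.1 h1
    rw [e2] at hsum2
    refine ⟨hirr2, by rw [e1']; exact hq1neg, hq2pos, ?_⟩
    rw [e1']
    linarith
  · exact (hp _ (adiag_mem hmono hodd) (show p ∈ {r : ℝ × ℝ | r.2 = -σ r.1} from h)).elim
  · obtain ⟨e1, hq2pos, hq2lt, hsum1, hirr1⟩ := stepD hmono hodd hp hx h
    obtain ⟨e2', hq1neg, hq1lt, hsum2, hirr2⟩ :=
      stepC hmono hodd hirr1 hq2pos (by rw [e1]; exact hq2lt)
    have hq1c : -(Facc σ (Facc σ p)).1 < σ.symm (Facc σ p).2 := by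
      have h1 : σ (-(Facc σ (Facc σ p)).1) < σ (σ.symm (Facc σ p).2) := by
        rw [hodd, σ.apply_symm_apply]; linarith
      exact hmono.lt_iff_lt.1 h1
    rw [e1] at hsum2
    refine ⟨hirr2, hq1neg, by rw [e2']; exact hq2pos, ?_⟩
    rw [e2']
    linarith

include hmono hodd in
lemma contractF {p : ℝ × ℝ} (hp : Irr σ p) :
    Irr σ (Facc σ (Facc σ p)) ∧
      |(Facc σ (Facc σ p)).1| + |(Facc σ (Facc σ p)).2| ≤ (|p.1| + |p.2|) / 2 := by
  have hx0 : p.1 ≠ 0 := fun h => hp _ Oy_mem h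
  have hy0 : p.2 ≠ 0 := fun h => hp _ Ox_mem h
  have hnegF : Facc σ (Facc σ (-p)) = -(Facc σ (Facc σ p)) := by
    rw [Facc_neg hodd, Facc_neg hodd]
  rcases lt_trichotomy p.1 0 with hx | hx | hx
  · rcases lt_trichotomy p.2 0 with hy | hy | hy
    · -- third quadrant: use -p in Q1
      have hnp : Irr σ (-p) := irr_neg hodd hp
      have e1 : (-p).1 = -p.1 := rfl
      have e2 : (-p).2 = -p.2 := rfl
      obtain ⟨hi, h1, h2, h3⟩ := dblQ1 hmono hodd hnp (by rw [e1]; linarith) (by rw [e2]; linarith)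
      rw [hnegF] at hi h1 h2 h3
      have f1 : (-(Facc σ (Facc σ p))).1 = -(Facc σ (Facc σ p)).1 := rfl
      have f2 : (-(Facc σ (Facc σ p))).2 = -(Facc σ (Facc σ p)).2 := rfl
      rw [f1] at h1
      rw [f2] at h2
      rw [f1, f2, e1, e2] at h3
      have hi' : Irr σ (Facc σ (Facc σ p)) := by
        have := irr_neg hodd hi
        rwa [neg_neg] at this
      refine ⟨hi', ?_⟩
      rw [abs_of_neg (by linarith : (Facc σ (Facc σ p)).1 < 0),
        abs_of_neg (by linarith : (Facc σ (Facc σ p)).2 < 0),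
        abs_of_neg hx, abs_of_neg hy]
      linarith
    · exact absurd hy hy0
    · -- second quadrant
      obtain ⟨hi, h1, h2, h3⟩ := dblQ2 hmono hodd hp hx hy
      refine ⟨hi, ?_⟩
      rw [abs_of_neg h1, abs_of_pos h2, abs_of_neg hx, abs_of_pos hy]
      linarith
  · exact absurd hx hx0
  · rcases lt_trichotomy p.2 0 with hy | hy | hy
    · -- fourth quadrant: -p in Q2
      have hnp : Irr σ (-p) := irr_neg hodd hp
      have e1 : (-p).1 = -p.1 := rfl
      have e2 : (-p).2 = -p.2 := rfl
      obtain ⟨hi, h1, h2, h3⟩ := dblQ2 hmono hodd hnp (by rw [e1]; linarith) (by rw [e2]; linarith)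
      rw [hnegF] at hi h1 h2 h3
      have f1 : (-(Facc σ (Facc σ p))).1 = -(Facc σ (Facc σ p)).1 := rfl
      have f2 : (-(Facc σ (Facc σ p))).2 = -(Facc σ (Facc σ p)).2 := rfl
      rw [f1] at h1
      rw [f2] at h2
      rw [f1, f2, e1, e2] at h3
      have hi' : Irr σ (Facc σ (Facc σ p)) := by
        have := irr_neg hodd hi
        rwa [neg_neg] at this
      refine ⟨hi', ?_⟩
      rw [abs_of_pos (by linarith : 0 < (Facc σ (Facc σ p)).1),
        abs_of_neg (by linarith : (Facc σ (Facc σ p)).2 < 0),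
        abs_of_pos hx, abs_of_neg hy]
      linarith
    · exact absurd hy hy0
    · -- first quadrant
      obtain ⟨hi, h1, h2, h3⟩ := dblQ1 hmono hodd hp hx hy
      refine ⟨hi, ?_⟩
      rw [abs_of_pos h1, abs_of_pos h2, abs_of_pos hx, abs_of_pos hy]
      linarith

end Steps

/-- U_σ = F_σ² contracts the ℓ¹-norm of σ-irrational points by a factor 2 at each step. -/
theorem stmt_5 (σ : ℝ ≃ ℝ) (hmono : StrictMono σ) (hodd : ∀ x : ℝ, σ (-x) = -σ x)
    (p : ℝ × ℝ) (hp : ∀ L ∈ ratLines σ, p ∉ L) (n : ℕ) :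
    |((Facc σ ∘ Facc σ)^[n] p).1| + |((Facc σ ∘ Facc σ)^[n] p).2| ≤
      (|p.1| + |p.2|) / 2 ^ n := by
  have key : ∀ m : ℕ, ∀ q : ℝ × ℝ, Irr σ q →
      Irr σ ((Facc σ ∘ Facc σ)^[m] q) ∧
      |((Facc σ ∘ Facc σ)^[m] q).1| + |((Facc σ ∘ Facc σ)^[m] q).2| ≤
        (|q.1| + |q.2|) / 2 ^ m := by
    intro m
    induction m with
    | zero =>
      intro q hq
      refine ⟨hq, ?_⟩
      simp
    | succ m ih =>
      intro q hq
      obtain ⟨hc1, hc2⟩ := contractF hmono hodd hq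
      have e : (Facc σ ∘ Facc σ)^[m+1] q = (Facc σ ∘ Facc σ)^[m] ((Facc σ ∘ Facc σ) q) :=
        Function.iterate_succ_apply _ _ _
      have e2 : (Facc σ ∘ Facc σ) q = Facc σ (Facc σ q) := rfl
      rw [e, e2]
      obtain ⟨h1, h2⟩ := ih (Facc σ (Facc σ q)) hc1
      refine ⟨h1, le_trans h2 ?_⟩
      have h2n : (0:ℝ) < 2 ^ m := by positivity
      rw [pow_succ,
        show (|q.1| + |q.2|) / (2 ^ m * 2) = ((|q.1| + |q.2|) / 2) / 2 ^ m from by ring]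
      exact (div_le_div_iff_of_pos_right h2n).mpr hc2
  exact (key n p hp).2
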